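/- For each integer d with 0 ≤ d ≤ n there exists a nonzero polynomial p of degree at most d satisfying the functional equation x·p(x) + (n − x)·p(x+2) = (n − 2d)·p(x+1) identically; consequently the vector (p(1), p(2), ..., p(n+1)) is an eigenvector of the Kac matrix S_n with eigenvalue n − 2d. -/

import Mathlib

open Polynomial



noncomputable def Fop (n d : ℕ) : ℝ[X] →ₗ[ℝ] ℝ[X] where
  toFun p := X * p + (C (n : ℝ) - X) * p.comp (X + C 2) - C ((n : ℝ) - 2 * d) * p.comp (X + C 1)
  map_add' p q := by simp [add_comp]; ring
  map_smul' a p := by simp [smul_comp, smul_eq_C_mul]; ring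

lemma Fop_monomial_coeff (n d k : ℕ) (hk : k ≤ d) (j : ℕ) (hj : d ≤ j) :
    (Fop n d (X ^ k)).coeff j = 0 := by
  have hXk : ∀ c : ℝ, ((X : ℝ[X]) ^ k).comp (X + C c) = (X + C c) ^ k := by
    intro c; simp [pow_comp]
  simp only [Fop, LinearMap.coe_mk, AddHom.coe_mk, hXk]
  rcases Nat.eq_zero_or_pos k with rfl | hkpos
  · simp only [pow_zero, mul_one]
    rcases Nat.eq_zero_or_pos j with rfl | hjpos
    · have hd : d = 0 := Nat.le_zero.mp hj
      simp [hd]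
    · obtain ⟨j', rfl⟩ := Nat.exists_eq_succ_of_ne_zero hjpos.ne'
      simp [coeff_X, coeff_C, Nat.succ_ne_zero]
  · have hjpos : 0 < j := lt_of_lt_of_le hkpos (hk.trans hj)
    obtain ⟨j', rfl⟩ := Nat.exists_eq_succ_of_ne_zero hjpos.ne'
    rw [← pow_succ']
    rw [coeff_sub, coeff_add, coeff_X_pow, sub_mul, coeff_sub, coeff_C_mul, coeff_X_mul,
      coeff_C_mul, coeff_X_add_C_pow, coeff_X_add_C_pow, coeff_X_add_C_pow, one_pow, one_mul]
    have hkj : k ≤ j' + 1 := le_trans hk hj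
    rcases eq_or_lt_of_le hkj with heq | hlt
    · -- j'+1 = k, so d = k
      have hdk : d = k := le_antisymm (heq ▸ hj) hk
      have h1 : k - (j' + 1) = 0 := by omega
      have h2 : k - j' = 1 := by omega
      have h3 : k.choose (j' + 1) = 1 := by rw [← heq, Nat.choose_self]
      have h4 : k.choose j' = k := by
        have : j' = k - 1 := by omega
        subst this
        rw [← Nat.choose_symm (Nat.sub_le k 1)]
        have : k - (k - 1) = 1 := by omega
        rw [this, Nat.choose_one_right]
      rw [if_neg (by omega), h1, h2, h3, h4, hdk]
      push_cast
      ring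
    · have hkj' : k ≤ j' := by omega
      rcases eq_or_lt_of_le hkj' with heq2 | hlt2
      · -- j' = k
        have h1 : k.choose (j' + 1) = 0 := Nat.choose_eq_zero_of_lt hlt
        have h2 : k.choose j' = 1 := by rw [← heq2, Nat.choose_self]
        have h3 : k - j' = 0 := by omega
        rw [if_pos (by omega), h1, h2, h3]
        push_cast
        ring
      · have h1 : k.choose (j' + 1) = 0 := Nat.choose_eq_zero_of_lt hlt
        have h2 : k.choose j' = 0 := Nat.choose_eq_zero_of_lt (by omega)
        rw [if_neg (by omega), h1, h2]
        push_cast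
        ring

lemma Fop_degree_lt (n d : ℕ) (p : ℝ[X]) (hp : p.degree < ((d + 1 : ℕ) : ℕ∞)) :
    (Fop n d p).degree < (d : ℕ) := by
  rw [degree_lt_iff_coeff_zero]
  intro j hj
  have hj' : d ≤ j := by exact_mod_cast hj
  rcases eq_or_ne p 0 with rfl | hp0
  · simp
  have hnd : p.natDegree < d + 1 := (natDegree_lt_iff_degree_lt hp0).mpr hp
  conv_lhs => rw [p.as_sum_range' (d + 1) hnd]
  have : ∀ i c, (monomial i c : ℝ[X]) = c • X ^ i := by
    intro i c; rw [Polynomial.smul_X_eq_monomial]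
  simp_rw [this]
  rw [map_sum, finset_sum_coeff]
  refine Finset.sum_eq_zero fun i hi => ?_
  rw [map_smul, coeff_smul, Fop_monomial_coeff n d i (by
    simpa using Nat.lt_succ_iff.mp (Finset.mem_range.mp hi)) j hj', smul_zero]

lemma exists_kernel (n d : ℕ) :
    ∃ p : ℝ[X], p ≠ 0 ∧ p.degree ≤ (d : ℕ∞) ∧ Fop n d p = 0 := by
  have hmem : ∀ x : degreeLT ℝ (d + 1), Fop n d (x : ℝ[X]) ∈ degreeLT ℝ d := by
    intro x
    rw [mem_degreeLT]
    exact Fop_degree_lt n d x (mem_degreeLT.mp x.2)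
  let G : degreeLT ℝ (d + 1) →ₗ[ℝ] degreeLT ℝ d :=
    ((Fop n d).domRestrict (degreeLT ℝ (d + 1))).codRestrict (degreeLT ℝ d) hmem
  have hfin : ∀ m : ℕ, Module.finrank ℝ (degreeLT ℝ m) = m := by
    intro m
    rw [(degreeLTEquiv ℝ m).finrank_eq]
    simp [Module.finrank_fin_fun]
  have : Module.Finite ℝ (degreeLT ℝ d) := Module.Finite.equiv (degreeLTEquiv ℝ d).symm
  have hGni : ¬ Function.Injective G := by
    intro h
    have := LinearMap.finrank_le_finrank_of_injective h
    rw [hfin, hfin] at this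
    omega
  rw [← LinearMap.ker_eq_bot] at hGni
  obtain ⟨q, hqker, hq0⟩ := Submodule.exists_mem_ne_zero_of_ne_bot hGni
  refine ⟨(q : ℝ[X]), by simpa using hq0, ?_, ?_⟩
  · have hlt := mem_degreeLT.mp q.2
    have h0 : (q : ℝ[X]) ≠ 0 := by simpa using hq0
    have hnd : (q : ℝ[X]).natDegree < d + 1 := (natDegree_lt_iff_degree_lt h0).mpr hlt
    exact degree_le_of_natDegree_le (Nat.lt_succ_iff.mp hnd)
  · have := hqker
    rw [LinearMap.mem_ker] at this
    have h2 := congrArg (Subtype.val) this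
    exact h2

/-- The `(n+1) × (n+1)` Kac matrix: subdiagonal entries `1, 2, ..., n`,
superdiagonal entries `n, n-1, ..., 1`, and zeros elsewhere. -/
def kacMatrix (n : ℕ) : Matrix (Fin (n + 1)) (Fin (n + 1)) ℝ :=
  Matrix.of fun i j =>
    if (i : ℕ) = (j : ℕ) + 1 then (i : ℝ)
    else if (j : ℕ) = (i : ℕ) + 1 then (n : ℝ) + 1 - (j : ℝ)
    else 0

theorem kac_eigenvector_from_polynomial (n : ℕ) (d : ℕ) (hd : d ≤ n) :
    ∃ p : ℝ[X], p ≠ 0 ∧ p.degree ≤ d ∧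
      (X * p + (C (n : ℝ) - X) * p.comp (X + C 2)
          = C ((n : ℝ) - 2 * d) * p.comp (X + C 1)) ∧
      (fun i : Fin (n + 1) => p.eval ((i : ℕ) + 1 : ℝ)) ≠ 0 ∧
      (kacMatrix n).mulVec (fun i => p.eval ((i : ℕ) + 1 : ℝ))
        = ((n : ℝ) - 2 * d) • fun i : Fin (n + 1) => p.eval ((i : ℕ) + 1 : ℝ) := by
  obtain ⟨p, hp0, hdeg, hker⟩ := exists_kernel n d
  have heqn : X * p + (C (n : ℝ) - X) * p.comp (X + C 2)
      = C ((n : ℝ) - 2 * d) * p.comp (X + C 1) := by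
    have : X * p + (C (n : ℝ) - X) * p.comp (X + C 2)
        - C ((n : ℝ) - 2 * d) * p.comp (X + C 1) = 0 := hker
    linear_combination this
  -- pointwise evaluated equation
  have heval : ∀ x : ℝ, x * p.eval x + ((n : ℝ) - x) * p.eval (x + 2)
      = ((n : ℝ) - 2 * d) * p.eval (x + 1) := by
    intro x
    have := congrArg (Polynomial.eval x) heqn
    simpa [eval_comp] using this
  refine ⟨p, hp0, hdeg, heqn, ?_, ?_⟩
  · intro hv
    apply hp0
    refine p.eq_zero_of_natDegree_lt_card_of_eval_eq_zero
      (f := fun i : Fin (n + 1) => ((i : ℕ) + 1 : ℝ)) ?_ ?_ ?_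
    · intro a b hab
      simp only [add_left_inj] at hab
      exact Fin.ext (by exact_mod_cast hab)
    · intro i
      exact congrFun hv i
    · have h1 : p.natDegree ≤ d := natDegree_le_iff_degree_le.mpr hdeg
      simpa using lt_of_le_of_lt (h1.trans hd) (Nat.lt_succ_self n)
  · funext i
    simp only [Matrix.mulVec, dotProduct, Pi.smul_apply, smul_eq_mul]
    have hsplit : ∀ j : Fin (n + 1), kacMatrix n i j * p.eval ((j : ℕ) + 1 : ℝ)
        = (if (i : ℕ) = (j : ℕ) + 1 then (i : ℝ) * p.eval ((j : ℕ) + 1 : ℝ) else 0)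
          + (if (j : ℕ) = (i : ℕ) + 1 then ((n : ℝ) + 1 - (j : ℕ)) * p.eval ((j : ℕ) + 1 : ℝ) else 0) := by
      intro j
      simp only [kacMatrix, Matrix.of_apply]
      by_cases h1 : (i : ℕ) = (j : ℕ) + 1
      · rw [if_pos h1, if_pos h1, if_neg (by omega), add_zero]
      · rw [if_neg h1, if_neg h1, zero_add]
        by_cases h2 : (j : ℕ) = (i : ℕ) + 1
        · rw [if_pos h2, if_pos h2]
        · rw [if_neg h2, if_neg h2, zero_mul]
    rw [Finset.sum_congr rfl fun j _ => hsplit j, Finset.sum_add_distrib]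
    have hS1 : (∑ j : Fin (n + 1), if (i : ℕ) = (j : ℕ) + 1 then (i : ℝ) * p.eval ((j : ℕ) + 1 : ℝ) else 0)
        = ((i : ℕ) : ℝ) * p.eval ((i : ℕ) : ℝ) := by
      rcases Nat.eq_zero_or_pos (i : ℕ) with h0 | hpos
      · rw [Finset.sum_eq_zero fun j _ => if_neg (by omega), h0]
        simp
      · obtain ⟨m, hm⟩ := Nat.exists_eq_succ_of_ne_zero hpos.ne'
        have hmlt : m < n + 1 := by omega
        rw [Finset.sum_eq_single ⟨m, hmlt⟩]
        · rw [if_pos (by simp [hm])]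
          simp only [hm]
          push_cast
          ring_nf
        · intro j _ hj
          refine if_neg fun h => hj (Fin.ext ?_)
          simp only [hm] at h
          simp only [Fin.val_mk]
          omega
        · intro h; exact absurd (Finset.mem_univ _) h
    have hS2 : (∑ j : Fin (n + 1), if (j : ℕ) = (i : ℕ) + 1 then ((n : ℝ) + 1 - (j : ℕ)) * p.eval ((j : ℕ) + 1 : ℝ) else 0)
        = ((n : ℝ) - ((i : ℕ) : ℝ)) * p.eval (((i : ℕ) : ℝ) + 2) := by
      rcases eq_or_lt_of_le (Nat.lt_succ_iff.mp i.isLt) with hin | hin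
      · rw [Finset.sum_eq_zero fun j _ => if_neg (by omega), hin]
        simp
      · have hlt : (i : ℕ) + 1 < n + 1 := by omega
        rw [Finset.sum_eq_single ⟨(i : ℕ) + 1, hlt⟩]
        · rw [if_pos (by simp)]
          push_cast
          ring_nf
        · intro j _ hj
          refine if_neg fun h => hj (Fin.ext (by simpa using h))
        · intro h; exact absurd (Finset.mem_univ _) h
    rw [hS1, hS2, heval ((i : ℕ) : ℝ)]
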